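/- Let (S_n) be the random walk with i.i.d. increments taking values +1, -1, 0 with P(ξ=+1)=P(ξ=-1)=p ∈ (0,1/2) and P(ξ=0)=1-2p, started at S_0=0. Let T := inf{n > 0 : S_n ≤ 0}. Then for every n ≥ 2, P(T = n) = p² [P(S_{n-2} = 0) - P(S_{n-2} = 2)]. -/

import Mathlib

open MeasureTheory ProbabilityTheory Finset
open scoped ENNReal

noncomputable def fpN (a b : ℝ≥0∞) : ℕ → ℤ → ℝ≥0∞
  | 0, x => if x = 0 then 1 else 0
  | m + 1, x => a * fpN a b m (x - 1) + a * fpN a b m (x + 1) + b * fpN a b m x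

noncomputable def fpG (a b : ℝ≥0∞) : ℕ → ℤ → ℝ≥0∞
  | 0, x => if x = 0 then 1 else 0
  | m + 1, x => if 0 < x then
      a * fpG a b m (x - 1) + a * fpG a b m (x + 1) + b * fpG a b m x
    else 0

lemma fpN_symm (a b : ℝ≥0∞) : ∀ m x, fpN a b m (-x) = fpN a b m x := by
  intro m
  induction m with
  | zero => intro x; simp [fpN, neg_eq_zero]
  | succ m ih =>
    intro x
    have h1 : -x - 1 = -(x + 1) := by ring
    have h2 : -x + 1 = -(x - 1) := by ring
    simp only [fpN, h1, h2, ih]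
    ring

lemma fpG_key (a b : ℝ≥0∞) : ∀ m x, 1 ≤ x →
    fpG a b (m + 1) x + a * fpN a b m (x + 1) = a * fpN a b m (x - 1) := by
  intro m
  induction m with
  | zero =>
    intro x hx
    rcases eq_or_lt_of_le hx with h | h
    · simp [fpG, fpN, ← h]
    · have hx1 : x ≠ 1 := by omega
      have hxm1 : x ≠ -1 := by omega
      have hx0 : x ≠ 0 := by omega
      have : x + 1 ≠ 0 := by omega
      have h2 : x - 1 ≠ 0 := by omega
      simp [fpG, fpN, hx1, hx0, this, h2, lt_of_lt_of_le one_pos hx, hxm1,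
        show x - 1 ≠ 0 from h2]
  | succ m ih =>
    intro x hx
    rcases eq_or_lt_of_le hx with h | h
    · -- x = 1
      subst h
      have hG0 : fpG a b (m + 1) 0 = 0 := by simp [fpG]
      have e1 : fpG a b (m + 1 + 1) 1 = a * fpG a b (m + 1) 2 + b * fpG a b (m + 1) 1 := by
        simp only [fpG, if_pos (by norm_num : (0:ℤ) < 1)]
        norm_num [hG0]
      have e2 : fpN a b (m + 1) 2 = a * fpN a b m 1 + a * fpN a b m 3 + b * fpN a b m 2 := by
        simp only [fpN]; norm_num
      have i2 := ih 2 (by norm_num)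
      have i1 := ih 1 (by norm_num)
      norm_num at i2 i1
      calc fpG a b (m + 1 + 1) 1 + a * fpN a b (m + 1) 2
          = a * (fpG a b (m+1) 2 + a * fpN a b m 3) + b * (fpG a b (m+1) 1 + a * fpN a b m 2)
            + a * (a * fpN a b m 1) := by rw [e1, e2]; ring
        _ = a * (a * fpN a b m 1) + b * (a * fpN a b m 0) + a * (a * fpN a b m (-1)) := by
            rw [i2, i1, fpN_symm]
        _ = a * fpN a b (m + 1) (1 - 1) := by
            show _ = a * fpN a b (m+1) 0
            simp only [fpN]
            norm_num [fpN_symm]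
            ring
    · -- x ≥ 2
      have hx2 : 2 ≤ x := h
      have e1 : fpG a b (m + 1 + 1) x
          = a * fpG a b (m+1) (x-1) + a * fpG a b (m+1) (x+1) + b * fpG a b (m+1) x := by
        simp only [fpG]
        rw [if_pos (by omega : (0:ℤ) < x)]
      have e2 : fpN a b (m + 1) (x+1)
          = a * fpN a b m x + a * fpN a b m (x+2) + b * fpN a b m (x+1) := by
        simp only [fpN]
        rw [show x + 1 - 1 = x from by ring, show x + 1 + 1 = x + 2 from by ring]
      have i1 := ih (x-1) (by omega)
      have i2 := ih (x+1) (by omega)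
      have i3 := ih x hx
      rw [show x - 1 + 1 = x from by ring] at i1
      rw [show x + 1 + 1 = x + 2 from by ring, show x + 1 - 1 = x from by ring] at i2
      calc fpG a b (m + 1 + 1) x + a * fpN a b (m + 1) (x + 1)
          = a * (fpG a b (m+1) (x-1) + a * fpN a b m x)
            + a * (fpG a b (m+1) (x+1) + a * fpN a b m (x+2))
            + b * (fpG a b (m+1) x + a * fpN a b m (x+1)) := by rw [e1, e2]; ring
        _ = a * (a * fpN a b m (x-1-1)) + a * (a * fpN a b m x) + b * (a * fpN a b m (x-1)) := by
            rw [i1, i2, i3, show x - 1 - 1 = x - 2 from by ring]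
        _ = a * fpN a b (m + 1) (x - 1) := by
            simp only [fpN]
            rw [show x - 1 + 1 = x from by ring]
            ring

set_option linter.unusedSectionVars false

section
variable {Ω : Type*} [MeasurableSpace Ω] {μ : Measure Ω} [IsProbabilityMeasure μ]
  {ξ : ℕ → Ω → ℤ} {p : ℝ}

lemma fp_indep_aux (hindep : iIndepFun ξ μ)
    (hmeas : ∀ i, Measurable (ξ i))
    (m : ℕ) (A : Set (↥(Finset.range m) → ℤ)) (s : ℤ) :
    μ ((fun ω (i : ↥(Finset.range m)) => ξ i ω) ⁻¹' A ∩ ξ m ⁻¹' {s})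
      = μ ((fun ω (i : ↥(Finset.range m)) => ξ i ω) ⁻¹' A) * μ (ξ m ⁻¹' {s}) := by
  have h := hindep.indepFun_finset (Finset.range m) {m} (by simp) hmeas
  have h2 : IndepFun (fun ω (i : ↥(Finset.range m)) => ξ i ω) (ξ m) μ :=
    h.comp measurable_id
      (measurable_pi_apply (⟨m, Finset.mem_singleton_self m⟩ : ↥({m} : Finset ℕ)))
  exact h2.measure_inter_preimage_eq_mul A {s} .of_discrete (measurableSet_singleton s)

lemma fp_bad (hp : p ∈ Set.Ioo (0 : ℝ) (1 / 2))
    (hmeas : ∀ i, Measurable (ξ i))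
    (hup : ∀ i, μ {ω | ξ i ω = 1} = ENNReal.ofReal p)
    (hdown : ∀ i, μ {ω | ξ i ω = -1} = ENNReal.ofReal p)
    (hlazy : ∀ i, μ {ω | ξ i ω = 0} = ENNReal.ofReal (1 - 2 * p)) (j : ℕ) :
    μ {ω | ¬ (ξ j ω = 1 ∨ ξ j ω = -1 ∨ ξ j ω = 0)} = 0 := by
  have hA : MeasurableSet {ω | ξ j ω = 1} := hmeas j (measurableSet_singleton 1)
  have hB : MeasurableSet {ω | ξ j ω = -1} := hmeas j (measurableSet_singleton (-1))
  have hC : MeasurableSet {ω | ξ j ω = 0} := hmeas j (measurableSet_singleton 0)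
  have hU : μ ({ω | ξ j ω = 1} ∪ {ω | ξ j ω = -1} ∪ {ω | ξ j ω = 0}) = 1 := by
    rw [measure_union _ hC, measure_union _ hB, hup, hdown, hlazy,
      ← ENNReal.ofReal_add hp.1.le hp.1.le,
      ← ENNReal.ofReal_add (by linarith [hp.1]) (by nlinarith [hp.2])]
    · rw [show p + p + (1 - 2 * p) = 1 from by ring]; exact ENNReal.ofReal_one
    · rw [Set.disjoint_left]; rintro ω (h1 : ξ j ω = 1) (h2 : ξ j ω = -1); omega
    · rw [Set.disjoint_left]
      rintro ω (h1 | h1) (h2 : ξ j ω = 0) <;> simp only [Set.mem_setOf_eq] at h1 <;> omega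
  have : {ω | ¬ (ξ j ω = 1 ∨ ξ j ω = -1 ∨ ξ j ω = 0)}
      = ({ω | ξ j ω = 1} ∪ {ω | ξ j ω = -1} ∪ {ω | ξ j ω = 0})ᶜ := by
    ext ω; simp only [Set.mem_setOf_eq, Set.mem_compl_iff, Set.mem_union]; tauto
  rw [this, measure_compl ((hA.union hB).union hC) (measure_ne_top μ _), hU, measure_univ,
    tsub_self]

lemma fp_sandwich {E E' Z : Set Ω} (hZ : μ Z = 0) (h1 : E' ⊆ E) (h2 : E ⊆ E' ∪ Z) :
    μ E = μ E' := by
  refine le_antisymm ?_ (measure_mono h1)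
  calc μ E ≤ μ (E' ∪ Z) := measure_mono h2
    _ ≤ μ E' + μ Z := measure_union_le _ _
    _ = μ E' := by rw [hZ, add_zero]

lemma fp_sum_restrict (m k : ℕ) (hk : k ≤ m) (g : ℕ → ℤ) :
    ∑ i ∈ Finset.range m, (if i < k then g i else 0) = ∑ i ∈ Finset.range k, g i := by
  rw [← Finset.sum_subset (Finset.range_subset_range.2 hk)
    (fun i _ hi => if_neg (by simp only [Finset.mem_range] at hi ⊢; omega))]
  exact Finset.sum_congr rfl fun i hi => if_pos (Finset.mem_range.1 hi)

lemma fp_repr1 (m : ℕ) (y : ℤ) :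
    {ω | ∑ i ∈ Finset.range m, ξ i ω = y}
      = (fun ω (i : ↥(Finset.range m)) => ξ i ω) ⁻¹'
        {f : ↥(Finset.range m) → ℤ | ∑ i, f i = y} := by
  ext ω
  have hs : ∀ g : ℕ → ℤ, ∑ i : ↥(Finset.range m), g ↑i = ∑ i ∈ Finset.range m, g i :=
    fun g => Finset.sum_coe_sort _ g
  simp only [Set.mem_setOf_eq, Set.mem_preimage, hs (fun j => ξ j ω)]

lemma fp_repr2 (m : ℕ) (y : ℤ) :
    {ω | (∀ k, 0 < k → k ≤ m → 0 < ∑ i ∈ Finset.range k, ξ i ω)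
        ∧ ∑ i ∈ Finset.range m, ξ i ω = y}
      = (fun ω (i : ↥(Finset.range m)) => ξ i ω) ⁻¹'
        {f : ↥(Finset.range m) → ℤ |
          (∀ k, 0 < k → k ≤ m → 0 < ∑ i : ↥(Finset.range m), (if (i : ℕ) < k then f i else 0))
          ∧ ∑ i, f i = y} := by
  ext ω
  have hs : ∀ g : ℕ → ℤ, ∑ i : ↥(Finset.range m), g ↑i = ∑ i ∈ Finset.range m, g i :=
    fun g => Finset.sum_coe_sort _ g
  simp only [Set.mem_setOf_eq, Set.mem_preimage]
  constructor
  · rintro ⟨h1, h2⟩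
    refine ⟨fun k hk0 hk => ?_, by rw [hs (fun j => ξ j ω)]; exact h2⟩
    rw [hs (fun j => if j < k then ξ j ω else 0), fp_sum_restrict m k hk]
    exact h1 k hk0 hk
  · rintro ⟨h1, h2⟩
    refine ⟨fun k hk0 hk => ?_, by rw [← hs (fun j => ξ j ω)]; exact h2⟩
    have := h1 k hk0 hk
    rwa [hs (fun j => if j < k then ξ j ω else 0), fp_sum_restrict m k hk] at this

lemma fp_measB (hmeas : ∀ i, Measurable (ξ i)) (m : ℕ) (y : ℤ) :
    MeasurableSet {ω | ∑ i ∈ Finset.range m, ξ i ω = y} := by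
  rw [fp_repr1]
  exact (measurable_pi_lambda (fun ω (i : ↥(Finset.range m)) => ξ i ω) fun i => hmeas i) .of_discrete

lemma fp_measB2 (hmeas : ∀ i, Measurable (ξ i)) (m : ℕ) (y : ℤ) :
    MeasurableSet {ω | (∀ k, 0 < k → k ≤ m → 0 < ∑ i ∈ Finset.range k, ξ i ω)
        ∧ ∑ i ∈ Finset.range m, ξ i ω = y} := by
  rw [fp_repr2]
  exact (measurable_pi_lambda (fun ω (i : ↥(Finset.range m)) => ξ i ω) fun i => hmeas i) .of_discrete

lemma fpP1 (hp : p ∈ Set.Ioo (0 : ℝ) (1 / 2))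
    (hmeas : ∀ i, Measurable (ξ i))
    (hindep : iIndepFun ξ μ)
    (hup : ∀ i, μ {ω | ξ i ω = 1} = ENNReal.ofReal p)
    (hdown : ∀ i, μ {ω | ξ i ω = -1} = ENNReal.ofReal p)
    (hlazy : ∀ i, μ {ω | ξ i ω = 0} = ENNReal.ofReal (1 - 2 * p)) :
    ∀ m x, μ {ω | ∑ i ∈ Finset.range m, ξ i ω = x}
      = fpN (ENNReal.ofReal p) (ENNReal.ofReal (1 - 2 * p)) m x := by
  intro m
  induction m with
  | zero =>
    intro x
    simp only [Finset.range_zero, Finset.sum_empty, fpN]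
    by_cases hx : x = 0
    · simp [hx]
    · simp [hx, eq_comm]
  | succ m ih =>
    intro x
    have key : μ {ω | ∑ i ∈ Finset.range (m + 1), ξ i ω = x}
        = ∑ s ∈ ({-1, 0, 1} : Finset ℤ),
            μ ({ω | ∑ i ∈ Finset.range m, ξ i ω = x - s} ∩ ξ m ⁻¹' {s}) := by
      rw [← measure_biUnion_finset ?disj ?meas]
      case disj =>
        intro s hs t ht hst
        rw [Function.onFun, Set.disjoint_left]
        rintro ω ⟨-, h1⟩ ⟨-, h2⟩
        simp only [Set.mem_preimage, Set.mem_singleton_iff] at h1 h2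
        exact hst (h1 ▸ h2 ▸ rfl)
      case meas =>
        exact fun s _ => (fp_measB hmeas m (x - s)).inter (hmeas m (measurableSet_singleton s))
      apply fp_sandwich (fp_bad hp hmeas hup hdown hlazy m)
      · intro ω hω
        simp only [Set.mem_iUnion, Set.mem_inter_iff, Set.mem_setOf_eq, Set.mem_preimage,
          Set.mem_singleton_iff, exists_prop] at hω
        obtain ⟨s, _, h1, h2⟩ := hω
        simp only [Set.mem_setOf_eq, Finset.sum_range_succ]
        omega
      · intro ω hω
        simp only [Set.mem_setOf_eq, Finset.sum_range_succ] at hω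
        by_cases hb : ξ m ω = 1 ∨ ξ m ω = -1 ∨ ξ m ω = 0
        · left
          simp only [Set.mem_iUnion, Set.mem_inter_iff, Set.mem_setOf_eq, Set.mem_preimage,
            Set.mem_singleton_iff, exists_prop]
          refine ⟨ξ m ω, ?_, by omega, rfl⟩
          simp only [Finset.mem_insert, Finset.mem_singleton]
          omega
        · right; exact hb
    have hterm : ∀ s : ℤ, μ ({ω | ∑ i ∈ Finset.range m, ξ i ω = x - s} ∩ ξ m ⁻¹' {s})
        = fpN (ENNReal.ofReal p) (ENNReal.ofReal (1 - 2 * p)) m (x - s) * μ (ξ m ⁻¹' {s}) := by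
      intro s
      rw [fp_repr1, fp_indep_aux hindep hmeas, ← fp_repr1, ih]
    rw [key, show ({-1, 0, 1} : Finset ℤ) = insert (-1) (insert 0 {1}) from rfl,
      Finset.sum_insert (by decide), Finset.sum_insert (by decide), Finset.sum_singleton,
      hterm, hterm, hterm,
      show (ξ m ⁻¹' {-1} : Set Ω) = {ω | ξ m ω = -1} from rfl,
      show (ξ m ⁻¹' {0} : Set Ω) = {ω | ξ m ω = 0} from rfl,
      show (ξ m ⁻¹' {1} : Set Ω) = {ω | ξ m ω = 1} from rfl,
      hup, hdown, hlazy,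
      show x - -1 = x + 1 from by ring, show x - 0 = x from by ring]
    show _ = fpN _ _ (m + 1) x
    simp only [fpN]
    ring

lemma fpP2 (hp : p ∈ Set.Ioo (0 : ℝ) (1 / 2))
    (hmeas : ∀ i, Measurable (ξ i))
    (hindep : iIndepFun ξ μ)
    (hup : ∀ i, μ {ω | ξ i ω = 1} = ENNReal.ofReal p)
    (hdown : ∀ i, μ {ω | ξ i ω = -1} = ENNReal.ofReal p)
    (hlazy : ∀ i, μ {ω | ξ i ω = 0} = ENNReal.ofReal (1 - 2 * p)) :
    ∀ m x, μ {ω | (∀ k, 0 < k → k ≤ m → 0 < ∑ i ∈ Finset.range k, ξ i ω)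
        ∧ ∑ i ∈ Finset.range m, ξ i ω = x}
      = fpG (ENNReal.ofReal p) (ENNReal.ofReal (1 - 2 * p)) m x := by
  intro m
  induction m with
  | zero =>
    intro x
    have : {ω : Ω | (∀ k, 0 < k → k ≤ 0 → 0 < ∑ i ∈ Finset.range k, ξ i ω)
        ∧ ∑ i ∈ Finset.range 0, ξ i ω = x} = {ω : Ω | (0 : ℤ) = x} := by
      ext ω
      simp only [Set.mem_setOf_eq, Finset.range_zero, Finset.sum_empty]
      constructor
      · rintro ⟨-, h⟩; exact h
      · intro h; exact ⟨fun k hk0 hk => absurd hk (by omega), h⟩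
    rw [this]
    simp only [fpG]
    by_cases hx : x = 0
    · simp [hx]
    · simp [hx, eq_comm]
  | succ m ih =>
    intro x
    by_cases hx : 0 < x
    · have key : μ {ω | (∀ k, 0 < k → k ≤ m + 1 → 0 < ∑ i ∈ Finset.range k, ξ i ω)
            ∧ ∑ i ∈ Finset.range (m + 1), ξ i ω = x}
          = ∑ s ∈ ({-1, 0, 1} : Finset ℤ),
              μ ({ω | (∀ k, 0 < k → k ≤ m → 0 < ∑ i ∈ Finset.range k, ξ i ω)
                ∧ ∑ i ∈ Finset.range m, ξ i ω = x - s} ∩ ξ m ⁻¹' {s}) := by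
        rw [← measure_biUnion_finset ?disj ?meas]
        case disj =>
          intro s hs t ht hst
          rw [Function.onFun, Set.disjoint_left]
          rintro ω ⟨-, h1⟩ ⟨-, h2⟩
          simp only [Set.mem_preimage, Set.mem_singleton_iff] at h1 h2
          exact hst (h1 ▸ h2 ▸ rfl)
        case meas =>
          exact fun s _ => (fp_measB2 hmeas m (x - s)).inter (hmeas m (measurableSet_singleton s))
        apply fp_sandwich (fp_bad hp hmeas hup hdown hlazy m)
        · intro ω hω
          simp only [Set.mem_iUnion, Set.mem_inter_iff, Set.mem_setOf_eq, Set.mem_preimage,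
            Set.mem_singleton_iff, exists_prop] at hω
          obtain ⟨s, _, ⟨h1, h2⟩, h3⟩ := hω
          simp only [Set.mem_setOf_eq, Finset.sum_range_succ]
          constructor
          · intro k hk0 hk
            by_cases hkm : k ≤ m
            · exact h1 k hk0 hkm
            · have hke : k = m + 1 := by omega
              rw [hke, Finset.sum_range_succ]
              omega
          · omega
        · intro ω hω
          simp only [Set.mem_setOf_eq, Finset.sum_range_succ] at hω
          obtain ⟨h1, h2⟩ := hω
          by_cases hb : ξ m ω = 1 ∨ ξ m ω = -1 ∨ ξ m ω = 0
          · left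
            simp only [Set.mem_iUnion, Set.mem_inter_iff, Set.mem_setOf_eq, Set.mem_preimage,
              Set.mem_singleton_iff, exists_prop]
            refine ⟨ξ m ω, ?_, ⟨fun k hk0 hk => h1 k hk0 (by omega), by omega⟩, rfl⟩
            simp only [Finset.mem_insert, Finset.mem_singleton]
            omega
          · right; exact hb
      have hterm : ∀ s : ℤ,
          μ ({ω | (∀ k, 0 < k → k ≤ m → 0 < ∑ i ∈ Finset.range k, ξ i ω)
              ∧ ∑ i ∈ Finset.range m, ξ i ω = x - s} ∩ ξ m ⁻¹' {s})
          = fpG (ENNReal.ofReal p) (ENNReal.ofReal (1 - 2 * p)) m (x - s) * μ (ξ m ⁻¹' {s}) := by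
        intro s
        rw [fp_repr2, fp_indep_aux hindep hmeas, ← fp_repr2, ih]
      rw [key, show ({-1, 0, 1} : Finset ℤ) = insert (-1) (insert 0 {1}) from rfl,
        Finset.sum_insert (by decide), Finset.sum_insert (by decide), Finset.sum_singleton,
        hterm, hterm, hterm,
        show (ξ m ⁻¹' {-1} : Set Ω) = {ω | ξ m ω = -1} from rfl,
        show (ξ m ⁻¹' {0} : Set Ω) = {ω | ξ m ω = 0} from rfl,
        show (ξ m ⁻¹' {1} : Set Ω) = {ω | ξ m ω = 1} from rfl,
        hup, hdown, hlazy,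
        show x - -1 = x + 1 from by ring, show x - 0 = x from by ring]
      show _ = fpG _ _ (m + 1) x
      simp only [fpG, if_pos hx]
      ring
    · have : {ω : Ω | (∀ k, 0 < k → k ≤ m + 1 → 0 < ∑ i ∈ Finset.range k, ξ i ω)
          ∧ ∑ i ∈ Finset.range (m + 1), ξ i ω = x} = ∅ := by
        ext ω
        simp only [Set.mem_setOf_eq, Set.mem_empty_iff_false, iff_false, not_and]
        intro h1 h2
        have := h1 (m + 1) (by omega) le_rfl
        omega
      rw [this]
      simp [fpG, if_neg hx]

end

/-- Reflection-principle identity for the first entrance time `T` of `(-∞,0]`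
of the lazy symmetric random walk with `P(ξ = ±1) = p`, `P(ξ = 0) = 1 - 2p`:
for `n ≥ 2`, `P(T = n) = p² [P(S_{n-2} = 0) - P(S_{n-2} = 2)]`.
The event `{T = n}` is written explicitly as
`{S_1 > 0, …, S_{n-1} > 0, S_n ≤ 0}`. -/
theorem first_passage_reflection (Ω : Type*) [MeasurableSpace Ω]
    (μ : Measure Ω) [IsProbabilityMeasure μ]
    (p : ℝ) (hp : p ∈ Set.Ioo (0 : ℝ) (1 / 2))
    (ξ : ℕ → Ω → ℤ) (hmeas : ∀ i, Measurable (ξ i))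
    (hindep : iIndepFun ξ μ)
    (hup : ∀ i, μ {ω | ξ i ω = 1} = ENNReal.ofReal p)
    (hdown : ∀ i, μ {ω | ξ i ω = -1} = ENNReal.ofReal p)
    (hlazy : ∀ i, μ {ω | ξ i ω = 0} = ENNReal.ofReal (1 - 2 * p))
    (S : ℕ → Ω → ℤ) (hS : ∀ n ω, S n ω = ∑ i ∈ Finset.range n, ξ i ω)
    (n : ℕ) (hn : 2 ≤ n) :
    (μ {ω | (∀ k, 0 < k → k < n → 0 < S k ω) ∧ S n ω ≤ 0}).toReal =
      p ^ 2 * ((μ {ω | S (n - 2) ω = 0}).toReal -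
        (μ {ω | S (n - 2) ω = 2}).toReal) := by
  obtain ⟨n0, rfl⟩ : ∃ n0, n = n0 + 2 := ⟨n - 2, by omega⟩
  set a := ENNReal.ofReal p with ha
  set b := ENNReal.ofReal (1 - 2 * p) with hb
  have hset1 : {ω | (∀ k, 0 < k → k < n0 + 2 → 0 < S k ω) ∧ S (n0 + 2) ω ≤ 0}
      = {ω | (∀ k, 0 < k → k < n0 + 2 → 0 < ∑ i ∈ Finset.range k, ξ i ω)
          ∧ ∑ i ∈ Finset.range (n0 + 2), ξ i ω ≤ 0} := by
    ext ω; simp only [Set.mem_setOf_eq, hS]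
  have hset2 : ∀ y : ℤ, {ω | S (n0 + 2 - 2) ω = y}
      = {ω | ∑ i ∈ Finset.range n0, ξ i ω = y} := by
    intro y; ext ω
    simp only [Set.mem_setOf_eq, hS, Nat.add_sub_cancel]
  rw [hset1, hset2 0, hset2 2]
  have hstep1 : μ {ω | (∀ k, 0 < k → k < n0 + 2 → 0 < ∑ i ∈ Finset.range k, ξ i ω)
          ∧ ∑ i ∈ Finset.range (n0 + 2), ξ i ω ≤ 0}
      = μ ({ω | (∀ k, 0 < k → k ≤ n0 + 1 → 0 < ∑ i ∈ Finset.range k, ξ i ω)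
          ∧ ∑ i ∈ Finset.range (n0 + 1), ξ i ω = 1} ∩ ξ (n0 + 1) ⁻¹' {-1}) := by
    apply fp_sandwich (fp_bad hp hmeas hup hdown hlazy (n0 + 1))
    · rintro ω ⟨h12, h3⟩
      obtain ⟨h1, h2⟩ := h12
      simp only [Set.mem_preimage, Set.mem_singleton_iff] at h3
      simp only [Set.mem_setOf_eq]
      rw [Finset.sum_range_succ]
      exact ⟨fun k hk0 hk => h1 k hk0 (by omega), by omega⟩
    · intro ω hω
      simp only [Set.mem_setOf_eq] at hω
      obtain ⟨h1, h2⟩ := hω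
      rw [Finset.sum_range_succ] at h2
      by_cases hbad : ξ (n0 + 1) ω = 1 ∨ ξ (n0 + 1) ω = -1 ∨ ξ (n0 + 1) ω = 0
      · left
        have hpos : 0 < ∑ i ∈ Finset.range (n0 + 1), ξ i ω := h1 (n0 + 1) (by omega) (by omega)
        refine ⟨⟨fun k hk0 hk => h1 k hk0 (by omega), by omega⟩, ?_⟩
        simp only [Set.mem_preimage, Set.mem_singleton_iff]
        omega
      · right; exact hbad
  have hstep2 : μ ({ω | (∀ k, 0 < k → k ≤ n0 + 1 → 0 < ∑ i ∈ Finset.range k, ξ i ω)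
          ∧ ∑ i ∈ Finset.range (n0 + 1), ξ i ω = 1} ∩ ξ (n0 + 1) ⁻¹' {-1})
      = fpG a b (n0 + 1) 1 * a := by
    rw [fp_repr2, fp_indep_aux hindep hmeas, ← fp_repr2,
      fpP2 hp hmeas hindep hup hdown hlazy,
      show (ξ (n0 + 1) ⁻¹' {-1} : Set Ω) = {ω | ξ (n0 + 1) ω = -1} from rfl, hdown]
  have hN : ∀ y, μ {ω | ∑ i ∈ Finset.range n0, ξ i ω = y} = fpN a b n0 y :=
    fun y => fpP1 hp hmeas hindep hup hdown hlazy n0 y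
  have hfin : ∀ y, fpN a b n0 y ≠ ⊤ := fun y => by rw [← hN]; exact measure_ne_top μ _
  have hkey := fpG_key a b n0 1 le_rfl
  norm_num at hkey
  have hmain : μ {ω | (∀ k, 0 < k → k < n0 + 2 → 0 < ∑ i ∈ Finset.range k, ξ i ω)
          ∧ ∑ i ∈ Finset.range (n0 + 2), ξ i ω ≤ 0} + a * (a * fpN a b n0 2)
      = a * (a * fpN a b n0 0) := by
    rw [hstep1, hstep2]
    calc fpG a b (n0 + 1) 1 * a + a * (a * fpN a b n0 2)
        = a * (fpG a b (n0 + 1) 1 + a * fpN a b n0 2) := by ring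
      _ = a * (a * fpN a b n0 0) := by rw [hkey]
  have hfa : a ≠ ⊤ := ENNReal.ofReal_ne_top
  have htr := congrArg ENNReal.toReal hmain
  rw [ENNReal.toReal_add (measure_ne_top μ _)
      (ENNReal.mul_ne_top hfa (ENNReal.mul_ne_top hfa (hfin 2))),
    ENNReal.toReal_mul, ENNReal.toReal_mul, ENNReal.toReal_mul, ENNReal.toReal_mul,
    ha, ENNReal.toReal_ofReal hp.1.le, ← hN 0, ← hN 2] at htr
  linear_combination htr
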